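/- Let X be a systolic complex and let γ0, γ1 be two geodesics between vertices x and y, both of length n, meeting only at x and y, and let S: Δ → X be the minimal (hence flat) surface spanned by the cycle γ0 * γ1. Then every interior vertex of Δ is at distance at most n - 2 from each of the two endpoints x and y in the 1-skeleton of Δ; consequently the image of every interior vertex is at distance at most n - 2 from both x and y in X. -/

import Mathlib

open Finset

noncomputable section
open scoped Classical

/-- An abstract simplicial complex on vertex type `V`, given by its set of
(nonempty, finite) faces, closed under passing to nonempty subsets. -/
structure SComplex (V : Type) [DecidableEq V] where
  faces : Set (Finset V)
  not_empty_mem : ∅ ∉ faces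
  down_closed : ∀ s ∈ faces, ∀ t ⊆ s, t.Nonempty → t ∈ faces

namespace SComplex

variable {V : Type} [DecidableEq V] (K : SComplex V)

/-- The 1-skeleton of a simplicial complex, as a simple graph. -/
def graph : SimpleGraph V where
  Adj a b := a ≠ b ∧ ({a, b} : Finset V) ∈ K.faces
  symm := by
    constructor
    beta_reduce
    intro a b h
    refine ⟨h.1.symm, ?_⟩
    rw [Finset.pair_comm]
    exact h.2
  loopless := by
    constructor
    beta_reduce
    intro a h
    exact h.1 rfl

/-- A flag complex: every finite set of pairwise adjacent vertices spans a simplex. -/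
def Flag : Prop :=
  ∀ s : Finset V, s.Nonempty → (∀ a ∈ s, ∀ b ∈ s, a ≠ b → K.graph.Adj a b) → s ∈ K.faces

/-- An embedded cycle of length `n` in the 1-skeleton, given by an injective map
from `ZMod n` with consecutive vertices adjacent. -/
def IsCycle (n : ℕ) (f : ZMod n → V) : Prop :=
  Function.Injective f ∧ ∀ i : ZMod n, K.graph.Adj (f i) (f (i + 1))

/-- The cycle `f` has a diagonal: an edge joining two nonconsecutive vertices. -/
def HasDiagonal (n : ℕ) (f : ZMod n → V) : Prop :=
  ∃ i j : ZMod n, j ≠ i ∧ j ≠ i + 1 ∧ j ≠ i - 1 ∧ K.graph.Adj (f i) (f j)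

/-- `k`-largeness: flag, and every embedded cycle of length `3 < n < k` has a diagonal. -/
def Large (k : ℕ) : Prop :=
  K.Flag ∧ ∀ n : ℕ, 3 < n → n < k → ∀ f : ZMod n → V, K.IsCycle n f → K.HasDiagonal n f

/-- The link of a simplex `σ`. -/
def link (σ : Finset V) : SComplex V where
  faces := {t | t.Nonempty ∧ Disjoint t σ ∧ t ∪ σ ∈ K.faces}
  not_empty_mem := by
    rintro ⟨h, -, -⟩
    simp at h
  down_closed := by
    rintro s ⟨-, hd, hu⟩ t hts htne
    refine ⟨htne, hd.mono_left ?_, K.down_closed _ hu _ (Finset.union_subset_union hts Finset.Subset.rfl) ?_⟩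
    · exact Finset.le_iff_subset.2 hts
    · obtain ⟨x, hx⟩ := htne
      exact ⟨x, Finset.mem_union_left _ hx⟩

/-- Local `k`-largeness: the link of every simplex is `k`-large. -/
def LocallyLarge (k : ℕ) : Prop :=
  ∀ σ ∈ K.faces, (K.link σ).Large k

/-- A (full) geodesically convex subcomplex, specified by its vertex set:
it contains every geodesic of the 1-skeleton between any two of its vertices. -/
def ConvexSub (A : Set V) : Prop :=
  (∀ v ∈ A, ({v} : Finset V) ∈ K.faces) ∧
  ∀ x ∈ A, ∀ y ∈ A, ∀ p : K.graph.Walk x y, p.length = K.graph.dist x y →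
    ∀ v ∈ p.support, v ∈ A

/-- A `3`-convex subcomplex: full (each vertex is a vertex of `K`), and containing the
middle vertex of every geodesic of length 2 with both endpoints in it. -/
def ThreeConvex (A : Set V) : Prop :=
  (∀ v ∈ A, ({v} : Finset V) ∈ K.faces) ∧
  ∀ x ∈ A, ∀ z ∈ A, ∀ u : V, K.graph.Adj x u → K.graph.Adj u z →
    K.graph.dist x z = 2 → u ∈ A

end SComplex

/-- A combinatorial 2-dimensional surface-like complex: a finite set of triangles
(3-element vertex sets), every edge lying in at most two triangles. -/
structure CombSurface (W : Type) [DecidableEq W] where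
  triangles : Finset (Finset W)
  card_eq : ∀ t ∈ triangles, t.card = 3
  edge_le_two : ∀ e : Finset W, e.card = 2 → (triangles.filter fun t => e ⊆ t).card ≤ 2

namespace CombSurface

variable {W : Type} [DecidableEq W] (D : CombSurface W)

/-- Vertices of the surface. -/
def verts : Finset W := D.triangles.biUnion id

/-- Edges of the surface (2-element subsets of triangles). -/
def edges : Finset (Finset W) := D.triangles.biUnion fun t => Finset.powersetCard 2 t

/-- 1-skeleton of the surface. -/
def graph : SimpleGraph W where
  Adj a b := a ≠ b ∧ ∃ t ∈ D.triangles, a ∈ t ∧ b ∈ t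
  symm := by
    constructor
    beta_reduce
    rintro a b ⟨h1, t, ht, ha, hb⟩
    exact ⟨h1.symm, t, ht, hb, ha⟩
  loopless := by
    constructor
    beta_reduce
    rintro a ⟨h, -⟩
    exact h rfl

/-- The number of triangles containing a vertex. -/
def numTri (v : W) : ℕ := (D.triangles.filter fun t => v ∈ t).card

/-- A boundary edge: an edge contained in exactly one triangle. -/
def BoundaryEdge (e : Finset W) : Prop :=
  e.card = 2 ∧ (D.triangles.filter fun t => e ⊆ t).card = 1

/-- A boundary vertex: a vertex lying on a boundary edge. -/
def IsBoundary (v : W) : Prop := ∃ e : Finset W, D.BoundaryEdge e ∧ v ∈ e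

/-- The defect of a vertex: `3 - numTri` for boundary vertices, `6 - numTri` for
interior vertices. -/
def defect (v : W) : ℤ :=
  (if D.IsBoundary v then 3 else 6) - (D.numTri v : ℤ)

/-- Euler characteristic `V - E + F`. -/
def euler : ℤ := (D.verts.card : ℤ) - (D.edges.card : ℤ) + (D.triangles.card : ℤ)

/-- The link graph at a vertex `v`: two vertices are adjacent iff they span a
triangle together with `v`. -/
def linkGraph (v : W) : SimpleGraph W where
  Adj a b := a ≠ b ∧ ({v, a, b} : Finset W) ∈ D.triangles
  symm := by
    constructor
    beta_reduce
    rintro a b ⟨h1, h2⟩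
    refine ⟨h1.symm, ?_⟩
    rwa [Finset.pair_comm]
  loopless := by
    constructor
    beta_reduce
    rintro a ⟨h, -⟩
    exact h rfl

/-- The manifold condition: the link of every vertex is connected (together with
`edge_le_two` this makes every vertex link a path or a cycle). -/
def IsManifold : Prop :=
  ∀ v a b : W, D.graph.Adj v a → D.graph.Adj v b → (D.linkGraph v).Reachable a b

/-- The 1-skeleton is connected on the vertices of the surface. -/
def Conn : Prop := ∀ a ∈ D.verts, ∀ b ∈ D.verts, D.graph.Reachable a b

/-- A combinatorial disc: a connected combinatorial surface with Euler
characteristic 1 and nonempty boundary. -/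
def IsDisc : Prop :=
  D.IsManifold ∧ D.Conn ∧ D.euler = 1 ∧ ∃ e : Finset W, D.BoundaryEdge e

/-- An enumeration of the boundary of the surface as a cycle. -/
def BCycle (n : ℕ) (g : ZMod n → W) : Prop :=
  Function.Injective g ∧ (∀ i : ZMod n, D.BoundaryEdge {g i, g (i + 1)}) ∧
    ∀ v ∈ D.verts, D.IsBoundary v → ∃ i : ZMod n, g i = v

end CombSurface

/-- The area of a simplicial map on a surface: the number of triangles on which
it is injective. -/
def areaOf {W : Type} [DecidableEq W] {V : Type} [DecidableEq V]
    (D : CombSurface W) (φ : W → V) : ℕ :=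
  (D.triangles.filter fun t => (t.image φ).card = 3).card

namespace SComplex

variable {V : Type} [DecidableEq V] (K : SComplex V)

/-- A simplicial map from a combinatorial surface to the complex. -/
def IsSurfaceMap {W : Type} [DecidableEq W] (D : CombSurface W) (φ : W → V) : Prop :=
  ∀ t ∈ D.triangles, t.image φ ∈ K.faces

/-- The surface `(D, φ)` spans the cycle `f`: it is a simplicial map from a disc
whose boundary is mapped isomorphically onto `f`. -/
def Spans {W : Type} [DecidableEq W] (D : CombSurface W) (φ : W → V)
    {n : ℕ} (f : ZMod n → V) : Prop :=
  K.IsSurfaceMap D φ ∧ D.IsDisc ∧ ∃ g : ZMod n → W, D.BCycle n g ∧ ∀ i, φ (g i) = f i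

/-- `(D, φ)` is a minimal surface spanning the cycle `f`. -/
def MinSpans (D : CombSurface ℕ) (φ : ℕ → V) {n : ℕ} (f : ZMod n → V) : Prop :=
  K.Spans D φ f ∧
    ∀ (D' : CombSurface ℕ) (φ' : ℕ → V), K.Spans D' φ' f → areaOf D φ ≤ areaOf D' φ'

/-- Simple connectivity: every embedded cycle is spanned by a disc surface. -/
def SimplyConnected : Prop :=
  ∀ n : ℕ, 3 ≤ n → ∀ f : ZMod n → V, K.IsCycle n f →
    ∃ (D : CombSurface ℕ) (φ : ℕ → V), K.Spans D φ f

/-- `k`-systolic: connected, simply connected and locally `k`-large. -/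
def Systolic (k : ℕ) : Prop :=
  K.graph.Connected ∧ K.SimplyConnected ∧ K.LocallyLarge k

end SComplex

/-- The equilateral triangulation of the Euclidean plane: the triangular lattice
on `ℤ × ℤ` (1-skeleton). -/
def TriLattice : SimpleGraph (ℤ × ℤ) where
  Adj p q := p ≠ q ∧
    (p.1 - q.1) ^ 2 + (p.1 - q.1) * (p.2 - q.2) + (p.2 - q.2) ^ 2 = 1
  symm := by
    constructor
    beta_reduce
    rintro p q ⟨h1, h2⟩
    refine ⟨h1.symm, ?_⟩
    ring_nf
    ring_nf at h2
    linarith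
  loopless := by
    constructor
    beta_reduce
    rintro p ⟨h, -⟩
    exact h rfl


namespace Stmt14

def hexN (p : ℤ × ℤ) : ℕ := max (max p.1.natAbs p.2.natAbs) (p.1 + p.2).natAbs
def sixL : List (ℤ × ℤ) := [(1,0),(0,1),(1,1),(-1,0),(0,-1),(-1,-1)]

def hexU : List (ℤ × ℤ) := [(1,0),(-1,0),(0,1),(0,-1),(1,-1),(-1,1)]

lemma hexN_zero_iff {p : ℤ × ℤ} : hexN p = 0 ↔ p = (0,0) := by
  constructor
  · intro h
    have hp : p = (p.1, p.2) := rfl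
    rw [hp, Prod.mk.injEq]
    simp only [hexN] at h
    omega
  · rintro rfl; simp [hexN]

lemma unit_iff {p : ℤ × ℤ} : p ∈ hexU ↔ p.1 ^ 2 + p.1 * p.2 + p.2 ^ 2 = 1 := by
  obtain ⟨a, b⟩ := p
  constructor
  · intro h; fin_cases h <;> norm_num
  · intro h
    simp only at h
    have h4 : (2 * a + b) ^ 2 + 3 * b ^ 2 = 4 := by nlinarith [h]
    have hb1 : -1 ≤ b := by nlinarith
    have hb2 : b ≤ 1 := by nlinarith
    have ha1 : -1 ≤ a := by nlinarith [sq_nonneg (a + 2 * b)]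
    have ha2 : a ≤ 1 := by nlinarith [sq_nonneg (a + 2 * b)]
    interval_cases a <;> interval_cases b <;> simp_all [hexU]

lemma step_le {e : ℤ × ℤ} (he : e ∈ hexU) (p : ℤ × ℤ) :
    hexN (p.1 + e.1, p.2 + e.2) ≤ hexN p + 1 := by
  fin_cases he <;> (simp only [hexN]; omega)

lemma exists_desc {p : ℤ × ℤ} (hp : 1 ≤ hexN p) :
    ∃ e ∈ hexU, hexN (p.1 - e.1, p.2 - e.2) + 1 = hexN p := by
  obtain ⟨a, b⟩ := p
  simp only [hexN] at hp
  rcases lt_trichotomy a 0 with ha | ha | ha <;> rcases lt_trichotomy b 0 with hb | hb | hb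
  · exact ⟨(-1,0), by simp [hexU], by simp only [hexN]; omega⟩
  · exact ⟨(-1,0), by simp [hexU], by simp only [hexN]; omega⟩
  · exact ⟨(-1,1), by simp [hexU], by simp only [hexN]; omega⟩
  · exact ⟨(0,-1), by simp [hexU], by simp only [hexN]; omega⟩
  · exact absurd hp (by omega)
  · exact ⟨(0,1), by simp [hexU], by simp only [hexN]; omega⟩
  · exact ⟨(1,-1), by simp [hexU], by simp only [hexN]; omega⟩
  · exact ⟨(1,0), by simp [hexU], by simp only [hexN]; omega⟩
  · exact ⟨(1,0), by simp [hexU], by simp only [hexN]; omega⟩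

lemma adj_iff {p q : ℤ × ℤ} :
    TriLattice.Adj p q ↔ (p.1 - q.1, p.2 - q.2) ∈ hexU := by
  constructor
  · rintro ⟨-, h⟩
    exact unit_iff.mpr (by simpa using h)
  · intro h
    have h1 := unit_iff.mp h
    simp only at h1
    refine ⟨?_, h1⟩
    rintro rfl
    simp at h1

lemma walk_len_ge {p q : ℤ × ℤ} (W : TriLattice.Walk p q) :
    hexN (p.1 - q.1, p.2 - q.2) ≤ W.length := by
  induction W with
  | nil => simp [hexN]
  | @cons u v w h W ih =>
    have he : (u.1 - v.1, u.2 - v.2) ∈ hexU := adj_iff.mp h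
    have key := step_le he (v.1 - w.1, v.2 - w.2)
    have heq : (((v.1 - w.1, v.2 - w.2) : ℤ × ℤ).1 + ((u.1 - v.1, u.2 - v.2) : ℤ × ℤ).1,
        ((v.1 - w.1, v.2 - w.2) : ℤ × ℤ).2 + ((u.1 - v.1, u.2 - v.2) : ℤ × ℤ).2)
        = (u.1 - w.1, u.2 - w.2) := by
      simp only [Prod.mk.injEq]
      constructor <;> ring
    rw [heq] at key
    simp only [SimpleGraph.Walk.length_cons]
    omega

lemma exists_walk_hex : ∀ (n : ℕ) (p q : ℤ × ℤ), hexN (p.1 - q.1, p.2 - q.2) = n →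
    ∃ W : TriLattice.Walk p q, W.length = n := by
  intro n
  induction n with
  | zero =>
    intro p q h
    have h0 := hexN_zero_iff.mp h
    simp only [Prod.mk.injEq] at h0
    have : p = q := Prod.ext (by omega) (by omega)
    subst this
    exact ⟨.nil, rfl⟩
  | succ n ih =>
    intro p q h
    obtain ⟨e, he, hd⟩ := exists_desc (p := (p.1 - q.1, p.2 - q.2)) (by omega)
    simp only at hd
    set r : ℤ × ℤ := (p.1 - e.1, p.2 - e.2) with hr
    have hadj : TriLattice.Adj p r := by
      apply adj_iff.mpr
      have : (p.1 - r.1, p.2 - r.2) = e := by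
        have : e = (e.1, e.2) := rfl
        rw [this, Prod.mk.injEq]
        constructor <;> ring
      rw [this]; exact he
    have hrq : hexN (r.1 - q.1, r.2 - q.2) = n := by
      have : (r.1 - q.1, r.2 - q.2) = (p.1 - q.1 - e.1, p.2 - q.2 - e.2) := by
        simp only [hr, Prod.mk.injEq]; constructor <;> ring
      rw [this]; omega
    obtain ⟨W, hW⟩ := ih r q hrq
    exact ⟨.cons hadj W, by simp [hW]⟩

theorem tri_dist (p q : ℤ × ℤ) :
    TriLattice.dist p q = hexN (p.1 - q.1, p.2 - q.2) := by
  obtain ⟨W, hW⟩ := exists_walk_hex _ p q rfl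
  apply le_antisymm
  · exact hW ▸ SimpleGraph.dist_le W
  · obtain ⟨W', hW'⟩ := SimpleGraph.Reachable.exists_walk_length_eq_dist ⟨W⟩
    rw [← hW']
    exact walk_len_ge W'

lemma lin_le {st : ℤ × ℤ} (hst : st ∈ sixL) (p : ℤ × ℤ) :
    st.1 * p.1 + st.2 * p.2 ≤ (hexN p : ℤ) := by
  fin_cases hst <;> (simp only [hexN]; omega)

lemma exists_max (c : ℤ × ℤ) :
    ∃ st ∈ sixL, st.1 * c.1 + st.2 * c.2 = (hexN c : ℤ) := by
  have h : c.1 = (hexN c : ℤ) ∨ c.2 = (hexN c : ℤ) ∨ c.1 + c.2 = (hexN c : ℤ) ∨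
      -c.1 = (hexN c : ℤ) ∨ -c.2 = (hexN c : ℤ) ∨ -(c.1 + c.2) = (hexN c : ℤ) := by
    simp only [hexN]; omega
  rcases h with h | h | h | h | h | h
  · exact ⟨(1,0), by simp [sixL], by simpa using h⟩
  · exact ⟨(0,1), by simp [sixL], by simpa using h⟩
  · exact ⟨(1,1), by simp [sixL], by simp; linarith⟩
  · exact ⟨(-1,0), by simp [sixL], by simpa using h⟩
  · exact ⟨(0,-1), by simp [sixL], by simpa using h⟩
  · exact ⟨(-1,-1), by simp [sixL], by simp; linarith⟩

lemma exists_incr_dir {st : ℤ × ℤ} (hst : st ∈ sixL) :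
    ∃ e ∈ hexU, st.1 * e.1 + st.2 * e.2 = 1 := by
  fin_cases hst
  · exact ⟨(1,0), by simp [hexU], by norm_num⟩
  · exact ⟨(0,1), by simp [hexU], by norm_num⟩
  · exact ⟨(1,0), by simp [hexU], by norm_num⟩
  · exact ⟨(-1,0), by simp [hexU], by norm_num⟩
  · exact ⟨(0,-1), by simp [hexU], by norm_num⟩
  · exact ⟨(-1,0), by simp [hexU], by norm_num⟩

lemma two_neg_dirs : ∀ st ∈ sixL, ∀ e1 ∈ hexU, ∀ e2 ∈ hexU, ∀ e3 ∈ hexU,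
    e1 ≠ e2 → e1 ≠ e3 → e2 ≠ e3 →
    st.1 * e1.1 + st.2 * e1.2 ≤ -1 → st.1 * e2.1 + st.2 * e2.2 ≤ -1 →
    st.1 * e3.1 + st.2 * e3.2 ≤ -1 → False := by decide

def rot (e : ℤ × ℤ) : ℤ × ℤ := (e.1 + e.2, -e.1)

lemma rot_mem : ∀ e ∈ hexU, rot e ∈ hexU ∧ ((rot e).1 - e.1, (rot e).2 - e.2) ∈ hexU := by
  decide

lemma rot_covers : ∀ e ∈ hexU, ∀ e' ∈ hexU,
    e' = e ∨ e' = rot e ∨ e' = rot (rot e) ∨ e' = rot (rot (rot e)) ∨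
    e' = rot (rot (rot (rot e))) ∨ e' = rot (rot (rot (rot (rot e))))  := by
  decide

lemma two_nbrs : ∀ e ∈ hexU, ∀ f1 ∈ hexU, ∀ f2 ∈ hexU, ∀ g ∈ hexU,
    (f1.1 - e.1, f1.2 - e.2) ∈ hexU → (f2.1 - e.1, f2.2 - e.2) ∈ hexU →
    (g.1 - e.1, g.2 - e.2) ∈ hexU → f1 ≠ f2 → g = f1 ∨ g = f2 := by
  decide

end Stmt14

namespace Stmt14W
variable {V : Type} {G : SimpleGraph V}

lemma exists_walk_getVert_left {u v : V} (p : G.Walk u v) (i : ℕ) :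
    ∃ q : G.Walk u (p.getVert i), q.length ≤ i := by
  induction p generalizing i with
  | nil => exact ⟨(SimpleGraph.Walk.nil).copy rfl (by rw [SimpleGraph.Walk.getVert_of_length_le _ (by simp)]), by simp⟩
  | @cons a b c h p ih =>
    cases i with
    | zero => exact ⟨(SimpleGraph.Walk.nil).copy rfl (by rw [SimpleGraph.Walk.getVert_zero]), by simp⟩
    | succ i =>
      obtain ⟨q, hq⟩ := ih i
      exact ⟨(SimpleGraph.Walk.cons h q).copy rfl (by rw [SimpleGraph.Walk.getVert_cons_succ]),
        by simpa using Nat.succ_le_succ hq⟩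

lemma exists_walk_getVert_right {u v : V} (p : G.Walk u v) (i : ℕ) :
    ∃ q : G.Walk (p.getVert i) v, q.length ≤ p.length - i := by
  induction p generalizing i with
  | nil => exact ⟨(SimpleGraph.Walk.nil).copy (by rw [SimpleGraph.Walk.getVert_of_length_le _ (by simp)]) rfl, by simp⟩
  | @cons a b c h p ih =>
    cases i with
    | zero =>
      exact ⟨(SimpleGraph.Walk.cons h p).copy (by rw [SimpleGraph.Walk.getVert_zero]) rfl, by simp⟩
    | succ i =>
      obtain ⟨q, hq⟩ := ih i
      exact ⟨q.copy (by rw [SimpleGraph.Walk.getVert_cons_succ]) rfl,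
        by simpa using hq.trans (by omega)⟩

/-- interior points of geodesics are at the expected distances -/
lemma geo_dist {x y : V} {n : ℕ} (p : G.Walk x y) (hlen : p.length = n)
    (hdist : G.dist x y = n) {i : ℕ} (hi : i ≤ n) :
    G.dist x (p.getVert i) = i ∧ G.dist (p.getVert i) y = n - i := by
  obtain ⟨q, hq⟩ := exists_walk_getVert_left p i
  obtain ⟨r, hr⟩ := exists_walk_getVert_right p i
  have hA : G.dist x (p.getVert i) ≤ i := (SimpleGraph.dist_le q).trans hq
  have hB : G.dist (p.getVert i) y ≤ n - i := (SimpleGraph.dist_le r).trans (by omega)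
  obtain ⟨q', hq'⟩ := SimpleGraph.Reachable.exists_walk_length_eq_dist (⟨q⟩ : G.Reachable x (p.getVert i))
  obtain ⟨r', hr'⟩ := SimpleGraph.Reachable.exists_walk_length_eq_dist (⟨r⟩ : G.Reachable (p.getVert i) y)
  have hC : n ≤ G.dist x (p.getVert i) + G.dist (p.getVert i) y := by
    have := SimpleGraph.dist_le (q'.append r')
    rw [SimpleGraph.Walk.length_append, hq', hr', hdist] at this
    omega
  omega

end Stmt14W


namespace Stmt14A

open SimpleGraph

variable {W : Type} [DecidableEq W]

lemma mem_verts_of_mem_tri {D : CombSurface W} {t : Finset W} {a : W}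
    (ht : t ∈ D.triangles) (ha : a ∈ t) : a ∈ D.verts :=
  Finset.mem_biUnion.mpr ⟨t, ht, ha⟩

lemma verts_of_adj {D : CombSurface W} {a b : W} (h : D.graph.Adj a b) :
    a ∈ D.verts ∧ b ∈ D.verts := by
  obtain ⟨-, t, ht, ha, hb⟩ := h
  exact ⟨mem_verts_of_mem_tri ht ha, mem_verts_of_mem_tri ht hb⟩

lemma adj_of_tri {D : CombSurface W} {t : Finset W} {a b : W}
    (ht : t ∈ D.triangles) (ha : a ∈ t) (hb : b ∈ t) (hne : a ≠ b) :
    D.graph.Adj a b := ⟨hne, t, ht, ha, hb⟩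

section Iso

variable {D : CombSurface W} {ι : W → ℤ × ℤ}

/-- a D-adjacency gives a lattice adjacency -/
lemma lat_adj (hiso : ∀ a ∈ D.verts, ∀ b ∈ D.verts,
      TriLattice.dist (ι a) (ι b) = D.graph.dist a b)
    {a b : W} (h : D.graph.Adj a b) : TriLattice.Adj (ι a) (ι b) := by
  obtain ⟨ha, hb⟩ := verts_of_adj h
  have h1 : D.graph.dist a b = 1 := SimpleGraph.dist_eq_one_iff_adj.mpr h
  exact SimpleGraph.dist_eq_one_iff_adj.mp (by rw [hiso a ha b hb, h1])

lemma lat_unit (hiso : ∀ a ∈ D.verts, ∀ b ∈ D.verts,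
      TriLattice.dist (ι a) (ι b) = D.graph.dist a b)
    {a b : W} (h : D.graph.Adj a b) :
    ((ι a).1 - (ι b).1, (ι a).2 - (ι b).2) ∈ Stmt14.hexU :=
  Stmt14.adj_iff.mp (lat_adj hiso h)

lemma eq_of_dist_zero (hiso : ∀ a ∈ D.verts, ∀ b ∈ D.verts,
      TriLattice.dist (ι a) (ι b) = D.graph.dist a b)
    (hinj : ∀ a ∈ D.verts, ∀ b ∈ D.verts, ι a = ι b → a = b)
    {a b : W} (ha : a ∈ D.verts) (hb : b ∈ D.verts)
    (h : D.graph.dist a b = 0) : a = b := by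
  have h1 : TriLattice.dist (ι a) (ι b) = 0 := by rw [hiso a ha b hb, h]
  rw [Stmt14.tri_dist] at h1
  have h2 := Stmt14.hexN_zero_iff.mp h1
  simp only [Prod.mk.injEq] at h2
  exact hinj a ha b hb (Prod.ext (by omega) (by omega))

/-- every interior vertex has all six lattice neighbours realized -/
lemma interior_hexagon (hiso : ∀ a ∈ D.verts, ∀ b ∈ D.verts,
      TriLattice.dist (ι a) (ι b) = D.graph.dist a b)
    (hinj : ∀ a ∈ D.verts, ∀ b ∈ D.verts, ι a = ι b → a = b)
    {w : W} (hw : w ∈ D.verts) (hnb : ¬D.IsBoundary w) :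
    ∀ e ∈ Stmt14.hexU, ∃ w', D.graph.Adj w w' ∧
      (ι w').1 = (ι w).1 + e.1 ∧ (ι w').2 = (ι w).2 + e.2 := by
  set P : ℤ × ℤ → Prop := fun e => ∃ w', D.graph.Adj w w' ∧
      (ι w').1 = (ι w).1 + e.1 ∧ (ι w').2 = (ι w).2 + e.2 with hP
  -- some direction is realized
  have step0 : ∃ e ∈ Stmt14.hexU, P e := by
    obtain ⟨t, ht, hwt⟩ := Finset.mem_biUnion.mp hw
    have hcard : 1 < t.card := by rw [D.card_eq t ht]; omega
    obtain ⟨p, hpt, hpw⟩ := Finset.exists_mem_ne hcard w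
    have hadj : D.graph.Adj w p := adj_of_tri ht hwt hpt (Ne.symm hpw)
    have hu := lat_unit hiso hadj.symm
    refine ⟨_, hu, p, hadj, ?_, ?_⟩ <;> simp <;> ring
  -- closure under passing to C6-neighbours
  have closure : ∀ e ∈ Stmt14.hexU, P e → ∀ e' ∈ Stmt14.hexU,
      (e'.1 - e.1, e'.2 - e.2) ∈ Stmt14.hexU → P e' := by
    rintro e he ⟨w', hadj, h1, h2⟩ e' he' hee'
    have hne : w ≠ w' := hadj.ne
    -- the edge {w, w'} lies in exactly two triangles
    set F := D.triangles.filter (fun t => ({w, w'} : Finset W) ⊆ t) with hF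
    have hFle : F.card ≤ 2 := D.edge_le_two _ (Finset.card_pair hne)
    obtain ⟨-, t0, ht0, hw0, hw0'⟩ := hadj
    have ht0F : t0 ∈ F := by
      rw [hF, Finset.mem_filter]
      exact ⟨ht0, by rw [Finset.insert_subset_iff, Finset.singleton_subset_iff]; exact ⟨hw0, hw0'⟩⟩
    have hFne1 : F.card ≠ 1 := by
      intro hc
      exact hnb ⟨{w, w'}, ⟨Finset.card_pair hne, hc⟩, Finset.mem_insert_self _ _⟩
    have hF2 : 1 < F.card := by
      have : 0 < F.card := Finset.card_pos.mpr ⟨t0, ht0F⟩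
      omega
    obtain ⟨t1, ht1, t2, ht2, ht12⟩ := Finset.one_lt_card.mp hF2
    -- extract third vertices
    have third : ∀ t ∈ F, ∃ q, q ∈ t ∧ q ∉ ({w, w'} : Finset W) ∧
        t = insert q ({w, w'} : Finset W) := by
      intro t htF
      rw [hF, Finset.mem_filter] at htF
      obtain ⟨htD, hsub⟩ := htF
      have hc3 : t.card = 3 := D.card_eq t htD
      have : ¬ t ⊆ ({w, w'} : Finset W) := by
        intro hts
        have := Finset.card_le_card hts
        rw [hc3, Finset.card_pair hne] at this
        omega
      obtain ⟨q, hqt, hqn⟩ := Finset.not_subset.mp this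
      refine ⟨q, hqt, hqn, (Finset.eq_of_subset_of_card_le (Finset.insert_subset hqt hsub) ?_).symm⟩
      rw [hc3, Finset.card_insert_of_notMem hqn, Finset.card_pair hne]
    obtain ⟨q1, hq1t, hq1n, hq1e⟩ := third t1 ht1
    obtain ⟨q2, hq2t, hq2n, hq2e⟩ := third t2 ht2
    have hq12 : q1 ≠ q2 := by
      rintro rfl
      exact ht12 (hq1e.trans hq2e.symm)
    have ht1D : t1 ∈ D.triangles := (Finset.mem_filter.mp (hF ▸ ht1)).1
    have ht2D : t2 ∈ D.triangles := (Finset.mem_filter.mp (hF ▸ ht2)).1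
    have hsub1 : ({w, w'} : Finset W) ⊆ t1 := (Finset.mem_filter.mp (hF ▸ ht1)).2
    have hsub2 : ({w, w'} : Finset W) ⊆ t2 := (Finset.mem_filter.mp (hF ▸ ht2)).2
    have hwt1 : w ∈ t1 := hsub1 (Finset.mem_insert_self _ _)
    have hwt2 : w ∈ t2 := hsub2 (Finset.mem_insert_self _ _)
    have hw't1 : w' ∈ t1 := hsub1 (by simp)
    have hw't2 : w' ∈ t2 := hsub2 (by simp)
    have hq1w : q1 ≠ w := by intro h; exact hq1n (by simp [h])
    have hq2w : q2 ≠ w := by intro h; exact hq2n (by simp [h])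
    have hq1w' : q1 ≠ w' := by intro h; exact hq1n (by simp [h])
    have hq2w' : q2 ≠ w' := by intro h; exact hq2n (by simp [h])
    have hadj1 : D.graph.Adj w q1 := adj_of_tri ht1D hwt1 hq1t (Ne.symm hq1w)
    have hadj2 : D.graph.Adj w q2 := adj_of_tri ht2D hwt2 hq2t (Ne.symm hq2w)
    have hadj1' : D.graph.Adj w' q1 := adj_of_tri ht1D hw't1 hq1t (Ne.symm hq1w')
    have hadj2' : D.graph.Adj w' q2 := adj_of_tri ht2D hw't2 hq2t (Ne.symm hq2w')
    set f1 : ℤ × ℤ := ((ι q1).1 - (ι w).1, (ι q1).2 - (ι w).2) with hf1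
    set f2 : ℤ × ℤ := ((ι q2).1 - (ι w).1, (ι q2).2 - (ι w).2) with hf2
    have hf1u : f1 ∈ Stmt14.hexU := lat_unit hiso hadj1.symm
    have hf2u : f2 ∈ Stmt14.hexU := lat_unit hiso hadj2.symm
    have hf1e : (f1.1 - e.1, f1.2 - e.2) ∈ Stmt14.hexU := by
      have := lat_unit hiso hadj1'.symm
      have heq : ((ι q1).1 - (ι w').1, (ι q1).2 - (ι w').2) = (f1.1 - e.1, f1.2 - e.2) := by
        rw [h1, h2, hf1]
        simp only [Prod.mk.injEq]
        constructor <;> ring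
      rwa [heq] at this
    have hf2e : (f2.1 - e.1, f2.2 - e.2) ∈ Stmt14.hexU := by
      have := lat_unit hiso hadj2'.symm
      have heq : ((ι q2).1 - (ι w').1, (ι q2).2 - (ι w').2) = (f2.1 - e.1, f2.2 - e.2) := by
        rw [h1, h2, hf2]
        simp only [Prod.mk.injEq]
        constructor <;> ring
      rwa [heq] at this
    have hf12 : f1 ≠ f2 := by
      intro h
      rw [hf1, hf2, Prod.mk.injEq] at h
      apply hq12
      apply hinj q1 (mem_verts_of_mem_tri ht1D hq1t) q2 (mem_verts_of_mem_tri ht2D hq2t)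
      exact Prod.ext (by omega) (by omega)
    rcases Stmt14.two_nbrs e he f1 hf1u f2 hf2u e' he' hf1e hf2e hee' hf12 with h | h
    · exact ⟨q1, hadj1, by rw [h, hf1]; constructor <;> simp <;> ring⟩
    · exact ⟨q2, hadj2, by rw [h, hf2]; constructor <;> simp <;> ring⟩
  -- rotation closure from one seed
  have rotP : ∀ e ∈ Stmt14.hexU, P e → P (Stmt14.rot e) := by
    intro e he hp
    exact closure e he hp _ (Stmt14.rot_mem e he).1 (Stmt14.rot_mem e he).2
  obtain ⟨e0, he0, hp0⟩ := step0
  have m1 := (Stmt14.rot_mem e0 he0).1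
  have p1 := rotP e0 he0 hp0
  have m2 := (Stmt14.rot_mem _ m1).1
  have p2 := rotP _ m1 p1
  have m3 := (Stmt14.rot_mem _ m2).1
  have p3 := rotP _ m2 p2
  have m4 := (Stmt14.rot_mem _ m3).1
  have p4 := rotP _ m3 p3
  have m5 := (Stmt14.rot_mem _ m4).1
  have p5 := rotP _ m4 p4
  intro e' he'
  rcases Stmt14.rot_covers e0 he0 e' he' with h | h | h | h | h | h <;> subst h <;> assumption

end Iso

end Stmt14A


namespace Stmt14A

variable {W : Type} [DecidableEq W]

section Main

variable {D : CombSurface W} {ι : W → ℤ × ℤ}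

lemma interior_incr (hiso : ∀ a ∈ D.verts, ∀ b ∈ D.verts,
      TriLattice.dist (ι a) (ι b) = D.graph.dist a b)
    (hinj : ∀ a ∈ D.verts, ∀ b ∈ D.verts, ι a = ι b → a = b)
    {x w : W} (hx : x ∈ D.verts) (hw : w ∈ D.verts) (hnb : ¬D.IsBoundary w) :
    ∃ w', D.graph.Adj w w' ∧ w' ∈ D.verts ∧
      D.graph.dist x w' = D.graph.dist x w + 1 := by
  have hc : D.graph.dist x w = Stmt14.hexN ((ι w).1 - (ι x).1, (ι w).2 - (ι x).2) := by
    rw [SimpleGraph.dist_comm, ← hiso w hw x hx, Stmt14.tri_dist]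
  obtain ⟨st, hst, hmax⟩ := Stmt14.exists_max ((ι w).1 - (ι x).1, (ι w).2 - (ι x).2)
  obtain ⟨e, he, hste⟩ := Stmt14.exists_incr_dir hst
  obtain ⟨w', hadj, h1, h2⟩ := interior_hexagon hiso hinj hw hnb e he
  have hw' : w' ∈ D.verts := (verts_of_adj hadj).2
  refine ⟨w', hadj, hw', ?_⟩
  have hc' : D.graph.dist x w' = Stmt14.hexN ((ι w').1 - (ι x).1, (ι w').2 - (ι x).2) := by
    rw [SimpleGraph.dist_comm, ← hiso w' hw' x hx, Stmt14.tri_dist]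
  have hpair : ((ι w').1 - (ι x).1, (ι w').2 - (ι x).2)
      = ((ι w).1 - (ι x).1 + e.1, (ι w).2 - (ι x).2 + e.2) := by
    rw [Prod.mk.injEq, h1, h2]
    constructor <;> ring
  rw [hpair] at hc'
  have hub := Stmt14.step_le he ((ι w).1 - (ι x).1, (ι w).2 - (ι x).2)
  simp only at hub hmax
  have hlin := Stmt14.lin_le hst ((ι w).1 - (ι x).1 + e.1, (ι w).2 - (ι x).2 + e.2)
  simp only at hlin
  have hlb : (Stmt14.hexN ((ι w).1 - (ι x).1, (ι w).2 - (ι x).2) : ℤ) + 1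
      ≤ (Stmt14.hexN ((ι w).1 - (ι x).1 + e.1, (ι w).2 - (ι x).2 + e.2) : ℤ) := by
    have hexp : st.1 * ((ι w).1 - (ι x).1 + e.1) + st.2 * ((ι w).2 - (ι x).2 + e.2)
        = st.1 * ((ι w).1 - (ι x).1) + st.2 * ((ι w).2 - (ι x).2)
          + (st.1 * e.1 + st.2 * e.2) := by ring
    rw [hexp, hmax, hste] at hlin
    linarith
  omega

lemma bound_all (hiso : ∀ a ∈ D.verts, ∀ b ∈ D.verts,
      TriLattice.dist (ι a) (ι b) = D.graph.dist a b)
    (hinj : ∀ a ∈ D.verts, ∀ b ∈ D.verts, ι a = ι b → a = b)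
    {x : W} {n : ℕ} (hx : x ∈ D.verts)
    (hbd : ∀ v ∈ D.verts, D.IsBoundary v → D.graph.dist x v ≤ n) :
    ∀ v ∈ D.verts, D.graph.dist x v ≤ n := by
  obtain ⟨v0, hv0, hmax⟩ := Finset.exists_max_image D.verts
    (fun v => D.graph.dist x v) ⟨x, hx⟩
  intro v hv
  refine le_trans (hmax v hv) ?_
  by_cases hb : D.IsBoundary v0
  · exact hbd v0 hv0 hb
  · obtain ⟨w', hadj, hw', hd⟩ := interior_incr hiso hinj hx hv0 hb
    have := hmax w' hw'
    omega

lemma digon_side (hiso : ∀ a ∈ D.verts, ∀ b ∈ D.verts,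
      TriLattice.dist (ι a) (ι b) = D.graph.dist a b)
    (hinj : ∀ a ∈ D.verts, ∀ b ∈ D.verts, ι a = ι b → a = b)
    {x y : W} (hx : x ∈ D.verts) (hy : y ∈ D.verts) (hxy : x ≠ y)
    {n : ℕ} (hn : D.graph.dist x y = n)
    (p0 p1 : D.graph.Walk x y) (h0 : p0.length = n) (h1 : p1.length = n)
    (hb0 : ∀ i < p0.length, D.BoundaryEdge {p0.getVert i, p0.getVert (i + 1)})
    (hb1 : ∀ i < p1.length, D.BoundaryEdge {p1.getVert i, p1.getVert (i + 1)})
    (hmeet : ∀ v : W, v ∈ p0.support → v ∈ p1.support → v = x ∨ v = y)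
    (hcover : ∀ v ∈ D.verts, D.IsBoundary v → v ∈ p0.support ∨ v ∈ p1.support) :
    ∀ w ∈ D.verts, ¬D.IsBoundary w → D.graph.dist x w ≤ n - 2 := by
  intro w hw hnbw
  have hn1 : 1 ≤ n := by
    rcases Nat.eq_zero_or_pos n with h | h
    · exfalso
      apply hxy
      exact (SimpleGraph.Reachable.dist_eq_zero_iff ⟨p0⟩).mp (by omega)
    · exact h
  have hxbd : D.IsBoundary x := by
    refine ⟨{p0.getVert 0, p0.getVert 1}, hb0 0 (by omega), ?_⟩
    rw [SimpleGraph.Walk.getVert_zero]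
    exact Finset.mem_insert_self _ _
  have hgeo0 : ∀ i ≤ n, D.graph.dist x (p0.getVert i) = i ∧
      D.graph.dist (p0.getVert i) y = n - i := fun i hi => Stmt14W.geo_dist p0 h0 hn hi
  have hgeo1 : ∀ i ≤ n, D.graph.dist x (p1.getVert i) = i ∧
      D.graph.dist (p1.getVert i) y = n - i := fun i hi => Stmt14W.geo_dist p1 h1 hn hi
  have hbd_le : ∀ v ∈ D.verts, D.IsBoundary v → D.graph.dist x v ≤ n := by
    intro v hv hbv
    rcases hcover v hv hbv with h | h
    · obtain ⟨i, hgi, hile⟩ := SimpleGraph.Walk.mem_support_iff_exists_getVert.mp h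
      rw [← hgi, (hgeo0 i (by omega)).1]
      omega
    · obtain ⟨i, hgi, hile⟩ := SimpleGraph.Walk.mem_support_iff_exists_getVert.mp h
      rw [← hgi, (hgeo1 i (by omega)).1]
      omega
  have hall := bound_all hiso hinj hx hbd_le
  have hn2 : 2 ≤ n := by
    by_contra hcon
    obtain ⟨w', hadj, hw', hd⟩ := interior_incr hiso hinj hx hw hnbw
    have h1' := hall w' hw'
    have h0' : D.graph.dist x w = 0 := by omega
    exact hnbw ((eq_of_dist_zero hiso hinj hx hw h0') ▸ hxbd)
  by_contra hcon
  obtain ⟨w', hadj, hw', hd⟩ := interior_incr hiso hinj hx hw hnbw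
  have hmle : D.graph.dist x w + 1 ≤ n := hd ▸ hall w' hw'
  have hm : D.graph.dist x w = n - 1 := by omega
  have hdw' : D.graph.dist x w' = n := by omega
  have hbw' : D.IsBoundary w' := by
    by_contra hniw'
    obtain ⟨w'', hadj2, hw'', hd2⟩ := interior_incr hiso hinj hx hw' hniw'
    have := hall w'' hw''
    omega
  have hw'y : w' = y := by
    rcases hcover w' hw' hbw' with h | h
    · obtain ⟨i, hgi, hile⟩ := SimpleGraph.Walk.mem_support_iff_exists_getVert.mp h
      have hh := (hgeo0 i (by omega)).1
      rw [hgi, hdw'] at hh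
      rw [← hgi, show i = p0.length by omega, SimpleGraph.Walk.getVert_length]
    · obtain ⟨i, hgi, hile⟩ := SimpleGraph.Walk.mem_support_iff_exists_getVert.mp h
      have hh := (hgeo1 i (by omega)).1
      rw [hgi, hdw'] at hh
      rw [← hgi, show i = p1.length by omega, SimpleGraph.Walk.getVert_length]
  rw [hw'y] at hadj
  -- the three distinct neighbours of y at distance n-1 from x
  have hs0y : D.graph.Adj (p0.getVert (n-1)) y := by
    have hh := p0.adj_getVert_succ (i := n-1) (by omega)
    have he : p0.getVert (n-1+1) = y := by
      rw [show n-1+1 = n by omega, ← h0, SimpleGraph.Walk.getVert_length]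
    rwa [he] at hh
  have ht0y : D.graph.Adj (p1.getVert (n-1)) y := by
    have hh := p1.adj_getVert_succ (i := n-1) (by omega)
    have he : p1.getVert (n-1+1) = y := by
      rw [show n-1+1 = n by omega, ← h1, SimpleGraph.Walk.getVert_length]
    rwa [he] at hh
  have hs0d : D.graph.dist x (p0.getVert (n-1)) = n - 1 := (hgeo0 (n-1) (by omega)).1
  have ht0d : D.graph.dist x (p1.getVert (n-1)) = n - 1 := (hgeo1 (n-1) (by omega)).1
  have hs0bd : D.IsBoundary (p0.getVert (n-1)) := by
    refine ⟨{p0.getVert (n-1), p0.getVert (n-1+1)}, hb0 (n-1) (by omega), ?_⟩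
    exact Finset.mem_insert_self _ _
  have ht0bd : D.IsBoundary (p1.getVert (n-1)) := by
    refine ⟨{p1.getVert (n-1), p1.getVert (n-1+1)}, hb1 (n-1) (by omega), ?_⟩
    exact Finset.mem_insert_self _ _
  have hws0 : w ≠ p0.getVert (n-1) := fun h => hnbw (h ▸ hs0bd)
  have hwt0 : w ≠ p1.getVert (n-1) := fun h => hnbw (h ▸ ht0bd)
  have hs0t0 : p0.getVert (n-1) ≠ p1.getVert (n-1) := by
    intro h
    have hs0p0 : p0.getVert (n-1) ∈ p0.support :=
      SimpleGraph.Walk.mem_support_iff_exists_getVert.mpr ⟨n-1, rfl, by omega⟩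
    have hs0p1 : p0.getVert (n-1) ∈ p1.support :=
      SimpleGraph.Walk.mem_support_iff_exists_getVert.mpr ⟨n-1, h.symm, by omega⟩
    rcases hmeet _ hs0p0 hs0p1 with h' | h'
    · rw [h', SimpleGraph.dist_self] at hs0d
      omega
    · rw [h'] at hs0d
      omega
  have hs0v : (p0.getVert (n-1)) ∈ D.verts := (verts_of_adj hs0y).1
  have ht0v : (p1.getVert (n-1)) ∈ D.verts := (verts_of_adj ht0y).1
  -- pass to the lattice
  have hcy : Stmt14.hexN ((ι y).1 - (ι x).1, (ι y).2 - (ι x).2) = n := by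
    rw [← Stmt14.tri_dist, hiso y hy x hx, SimpleGraph.dist_comm, hn]
  obtain ⟨st, hst, hmax⟩ := Stmt14.exists_max ((ι y).1 - (ι x).1, (ι y).2 - (ι x).2)
  simp only at hmax
  have key : ∀ v, D.graph.Adj v y → v ∈ D.verts → D.graph.dist x v = n - 1 →
      ((ι v).1 - (ι y).1, (ι v).2 - (ι y).2) ∈ Stmt14.hexU ∧
      st.1 * ((ι v).1 - (ι y).1) + st.2 * ((ι v).2 - (ι y).2) ≤ -1 := by
    intro v hadjv hvv hdv
    refine ⟨lat_unit hiso hadjv, ?_⟩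
    have hvx : Stmt14.hexN ((ι v).1 - (ι x).1, (ι v).2 - (ι x).2) = n - 1 := by
      rw [← Stmt14.tri_dist, hiso v hvv x hx, SimpleGraph.dist_comm, hdv]
    have hlin := Stmt14.lin_le hst ((ι v).1 - (ι x).1, (ι v).2 - (ι x).2)
    simp only at hlin
    rw [hvx] at hlin
    have hsplit : st.1 * ((ι v).1 - (ι x).1) + st.2 * ((ι v).2 - (ι x).2)
        = st.1 * ((ι y).1 - (ι x).1) + st.2 * ((ι y).2 - (ι x).2)
          + (st.1 * ((ι v).1 - (ι y).1) + st.2 * ((ι v).2 - (ι y).2)) := by ring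
    have hcast : ((n - 1 : ℕ) : ℤ) = (n : ℤ) - 1 := by omega
    rw [hcast] at hlin
    rw [hmax, hcy] at hsplit
    linarith
  obtain ⟨hu1, hl1⟩ := key w hadj hw hm
  obtain ⟨hu2, hl2⟩ := key _ hs0y hs0v hs0d
  obtain ⟨hu3, hl3⟩ := key _ ht0y ht0v ht0d
  have d12 : ((ι w).1 - (ι y).1, (ι w).2 - (ι y).2)
      ≠ ((ι (p0.getVert (n-1))).1 - (ι y).1, (ι (p0.getVert (n-1))).2 - (ι y).2) := by
    intro h
    rw [Prod.mk.injEq] at h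
    exact hws0 (hinj w hw _ hs0v (Prod.ext (by omega) (by omega)))
  have d13 : ((ι w).1 - (ι y).1, (ι w).2 - (ι y).2)
      ≠ ((ι (p1.getVert (n-1))).1 - (ι y).1, (ι (p1.getVert (n-1))).2 - (ι y).2) := by
    intro h
    rw [Prod.mk.injEq] at h
    exact hwt0 (hinj w hw _ ht0v (Prod.ext (by omega) (by omega)))
  have d23 : ((ι (p0.getVert (n-1))).1 - (ι y).1, (ι (p0.getVert (n-1))).2 - (ι y).2)
      ≠ ((ι (p1.getVert (n-1))).1 - (ι y).1, (ι (p1.getVert (n-1))).2 - (ι y).2) := by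
    intro h
    rw [Prod.mk.injEq] at h
    exact hs0t0 (hinj _ hs0v _ ht0v (Prod.ext (by omega) (by omega)))
  exact Stmt14.two_neg_dirs st hst _ hu1 _ hu2 _ hu3 d12 d13 d23
    (by simpa using hl1) (by simpa using hl2) (by simpa using hl3)

end Main

lemma push_dist {V : Type} [DecidableEq V] (K : SComplex V) {D : CombSurface W} {φ : W → V}
    (hmap : K.IsSurfaceMap D φ) {a b : W} (p : D.graph.Walk a b) :
    ∃ q : K.graph.Walk (φ a) (φ b), q.length ≤ p.length := by
  induction p with
  | nil => exact ⟨.nil, by simp⟩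
  | @cons a c b h p ih =>
    obtain ⟨q, hq⟩ := ih
    by_cases heq : φ a = φ c
    · refine ⟨q.copy heq.symm rfl, ?_⟩
      rw [SimpleGraph.Walk.length_copy, SimpleGraph.Walk.length_cons]
      omega
    · obtain ⟨-, t, ht, hat, hct⟩ := h
      have hface : ({φ a, φ c} : Finset V) ∈ K.faces := by
        apply K.down_closed _ (hmap t ht)
        · rw [Finset.insert_subset_iff, Finset.singleton_subset_iff]
          exact ⟨Finset.mem_image_of_mem φ hat, Finset.mem_image_of_mem φ hct⟩
        · exact ⟨φ a, Finset.mem_insert_self _ _⟩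
      refine ⟨.cons ⟨heq, hface⟩ q, ?_⟩
      show q.length + 1 ≤ p.length + 1
      omega

end Stmt14A

/-- every interior vertex of a flat digon spanned by two geodesics
of length `n` is at distance at most `n - 2` from both endpoints, in the domain
and (via the simplicial map) in the systolic complex. -/
theorem stmt14_digon_interior_distance {V : Type} [DecidableEq V]
    (K : SComplex V) (hK : K.Systolic 6)
    (D : CombSurface ℕ) (hdisc : D.IsDisc) (ι : ℕ → ℤ × ℤ)
    (hiso : ∀ a ∈ D.verts, ∀ b ∈ D.verts,
      TriLattice.dist (ι a) (ι b) = D.graph.dist a b)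
    (hinj : ∀ a ∈ D.verts, ∀ b ∈ D.verts, ι a = ι b → a = b)
    (x y : ℕ) (hx : x ∈ D.verts) (hy : y ∈ D.verts) (hxy : x ≠ y)
    {n : ℕ} (hn : D.graph.dist x y = n)
    (p0 p1 : D.graph.Walk x y) (h0 : p0.length = n) (h1 : p1.length = n)
    (hb0 : ∀ i < p0.length, D.BoundaryEdge {p0.getVert i, p0.getVert (i + 1)})
    (hb1 : ∀ i < p1.length, D.BoundaryEdge {p1.getVert i, p1.getVert (i + 1)})
    (hmeet : ∀ v : ℕ, v ∈ p0.support → v ∈ p1.support → v = x ∨ v = y)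
    (hcover : ∀ v ∈ D.verts, D.IsBoundary v → v ∈ p0.support ∨ v ∈ p1.support)
    (φ : ℕ → V) (hmap : K.IsSurfaceMap D φ)
    (hgX : K.graph.dist (φ x) (φ y) = n) :
    ∀ w ∈ D.verts, ¬D.IsBoundary w →
      D.graph.dist w x ≤ n - 2 ∧ D.graph.dist w y ≤ n - 2 ∧
      K.graph.dist (φ w) (φ x) ≤ n - 2 ∧ K.graph.dist (φ w) (φ y) ≤ n - 2 := by
  intro w hw hnb
  have hside_x := Stmt14A.digon_side hiso hinj hx hy hxy hn p0 p1 h0 h1 hb0 hb1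
    hmeet hcover w hw hnb
  have hn' : D.graph.dist y x = n := by rw [SimpleGraph.dist_comm]; exact hn
  have h0' : p0.reverse.length = n := by rw [SimpleGraph.Walk.length_reverse, h0]
  have h1' : p1.reverse.length = n := by rw [SimpleGraph.Walk.length_reverse, h1]
  have hb0' : ∀ i < p0.reverse.length,
      D.BoundaryEdge {p0.reverse.getVert i, p0.reverse.getVert (i + 1)} := by
    intro i hi
    rw [SimpleGraph.Walk.length_reverse] at hi
    rw [SimpleGraph.Walk.getVert_reverse, SimpleGraph.Walk.getVert_reverse]
    have hj : p0.length - i = (p0.length - (i + 1)) + 1 := by omega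
    rw [Finset.pair_comm, hj]
    exact hb0 _ (by omega)
  have hb1' : ∀ i < p1.reverse.length,
      D.BoundaryEdge {p1.reverse.getVert i, p1.reverse.getVert (i + 1)} := by
    intro i hi
    rw [SimpleGraph.Walk.length_reverse] at hi
    rw [SimpleGraph.Walk.getVert_reverse, SimpleGraph.Walk.getVert_reverse]
    have hj : p1.length - i = (p1.length - (i + 1)) + 1 := by omega
    rw [Finset.pair_comm, hj]
    exact hb1 _ (by omega)
  have hmeet' : ∀ v : ℕ, v ∈ p0.reverse.support → v ∈ p1.reverse.support →
      v = y ∨ v = x := by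
    intro v hv0 hv1
    rw [SimpleGraph.Walk.support_reverse, List.mem_reverse] at hv0 hv1
    rcases hmeet v hv0 hv1 with h | h
    · exact Or.inr h
    · exact Or.inl h
  have hcover' : ∀ v ∈ D.verts, D.IsBoundary v →
      v ∈ p0.reverse.support ∨ v ∈ p1.reverse.support := by
    intro v hv hb
    rcases hcover v hv hb with h | h
    · exact Or.inl (by rw [SimpleGraph.Walk.support_reverse, List.mem_reverse]; exact h)
    · exact Or.inr (by rw [SimpleGraph.Walk.support_reverse, List.mem_reverse]; exact h)
  have hside_y := Stmt14A.digon_side hiso hinj hy hx (Ne.symm hxy) hn'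
    p0.reverse p1.reverse h0' h1' hb0' hb1' hmeet' hcover' w hw hnb
  refine ⟨?_, ?_, ?_, ?_⟩
  · rw [SimpleGraph.dist_comm]; exact hside_x
  · rw [SimpleGraph.dist_comm]; exact hside_y
  · obtain ⟨p, hp⟩ := SimpleGraph.Reachable.exists_walk_length_eq_dist
      (hdisc.2.1 w hw x hx)
    obtain ⟨q, hq⟩ := Stmt14A.push_dist K hmap p
    calc K.graph.dist (φ w) (φ x) ≤ q.length := SimpleGraph.dist_le q
      _ ≤ p.length := hq
      _ = D.graph.dist w x := hp
      _ ≤ n - 2 := by rw [SimpleGraph.dist_comm]; exact hside_x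
  · obtain ⟨p, hp⟩ := SimpleGraph.Reachable.exists_walk_length_eq_dist
      (hdisc.2.1 w hw y hy)
    obtain ⟨q, hq⟩ := Stmt14A.push_dist K hmap p
    calc K.graph.dist (φ w) (φ y) ≤ q.length := SimpleGraph.dist_le q
      _ ≤ p.length := hq
      _ = D.graph.dist w y := hp
      _ ≤ n - 2 := by rw [SimpleGraph.dist_comm]; exact hside_y

end
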